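/- arXiv:1701.00273 — 2 statements merged into one kernel-verified Lean document; each statement's English description precedes it below -/
import Mathlib

section
/- Almost surely, f(X_{Δ,T}) = E[f(X_{Δ,T})] + Σ_{j=1}^{J} Σ_{r=1}^{m} Σ_{1≤s_1<…<s_r≤m} a_{j,r,s}(X_{Δ,(j−1)Δ}) ∏_{i=1}^{r} ξ_j^{s_i}; moreover E[f(X_{Δ,T})] = q_0(x_0). -/
open MeasureTheory ProbabilityTheory Finset

noncomputable section

/-- Map a boolean to `±1`. -/
def pm (b : Bool) : ℝ := if b then 1 else -1

/-- Law of a fair `±1` coin: `P(1) = P(-1) = 1/2`. -/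
def coinLaw : Measure ℝ :=
  (1 / 2 : ENNReal) • Measure.dirac (1 : ℝ) + (1 / 2 : ENNReal) • Measure.dirac (-1 : ℝ)

/-- Backward recursion: `qA Φ f k = q_{J-k}`, i.e. `qA Φ f 0 = q_J = f` and
`q_{j-1}(x) = 2^{-m} Σ_{y ∈ {-1,1}^m} q_j(Φ x y)`. -/
def qA {d m : ℕ} (Φ : (Fin d → ℝ) → (Fin m → ℝ) → Fin d → ℝ)
    (f : (Fin d → ℝ) → ℝ) : ℕ → (Fin d → ℝ) → ℝ
  | 0 => f
  | k + 1 => fun x =>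
      ((2 : ℝ) ^ m)⁻¹ * ∑ b : Fin m → Bool, qA Φ f k (Φ x fun i => pm (b i))

/-- Coefficient `a_{j,r,s}` with `k = J - j`, encoding the strictly increasing tuple
`1 ≤ s_1 < … < s_r ≤ m` as the (nonempty) subset `S = {s_1,…,s_r} ⊆ {1,…,m}`:
`a_{j,S}(x) = 2^{-m} Σ_{y ∈ {-1,1}^m} (Π_{i∈S} y^i) q_j(Φ x y)`. -/
def aA {d m : ℕ} (Φ : (Fin d → ℝ) → (Fin m → ℝ) → Fin d → ℝ)
    (f : (Fin d → ℝ) → ℝ) (k : ℕ) (S : Finset (Fin m)) (x : Fin d → ℝ) : ℝ :=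
  ((2 : ℝ) ^ m)⁻¹ *
    ∑ b : Fin m → Bool, (∏ i ∈ S, pm (b i)) * qA Φ f k (Φ x fun i => pm (b i))

/-- The discretisation scheme: `XA Φ x0 ξ 0 = x0`,
`XA Φ x0 ξ j = Φ (XA Φ x0 ξ (j-1)) ξ_j`. -/
def XA {d m : ℕ} {Ω : Type*} (Φ : (Fin d → ℝ) → (Fin m → ℝ) → Fin d → ℝ)
    (x0 : Fin d → ℝ) (ξ : ℕ → Ω → Fin m → ℝ) : ℕ → Ω → Fin d → ℝ
  | 0 => fun _ => x0
  | j + 1 => fun ω => Φ (XA Φ x0 ξ j ω) (ξ (j + 1) ω)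

/-- The scheme as a function of the coin variables. -/
def Yrec {d m : ℕ} (Φ : (Fin d → ℝ) → (Fin m → ℝ) → Fin d → ℝ)
    (x0 : Fin d → ℝ) : ℕ → (ℕ × Fin m → ℝ) → Fin d → ℝ
  | 0 => fun _ => x0
  | n + 1 => fun u => Φ (Yrec Φ x0 n u) (fun i => u (n + 1, i))

/-- The finite set of possible values of the scheme. -/
def Vset {d m : ℕ} (Φ : (Fin d → ℝ) → (Fin m → ℝ) → Fin d → ℝ)
    (x0 : Fin d → ℝ) : ℕ → Finset (Fin d → ℝ)
  | 0 => {x0}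
  | n + 1 => (Vset Φ x0 n ×ˢ (Finset.univ : Finset (Fin m → Bool))).image
      fun p => Φ p.1 fun i => pm (p.2 i)

section Aux

variable {d m : ℕ} (Φ : (Fin d → ℝ) → (Fin m → ℝ) → Fin d → ℝ)
  (f : (Fin d → ℝ) → ℝ) (x0 : Fin d → ℝ)

lemma pm_mul_add_one (b : Bool) (y : ℝ) (hy : y = 1 ∨ y = -1) :
    pm b * y + 1 = if pm b = y then 2 else 0 := by
  rcases hy with h | h <;> subst h <;> cases b <;> norm_num [pm]

lemma walsh (g : (Fin m → ℝ) → ℝ) (y : Fin m → ℝ) (hy : ∀ i, y i = 1 ∨ y i = -1) :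
    ∑ S : Finset (Fin m),
      (((2 : ℝ) ^ m)⁻¹ * ∑ b : Fin m → Bool,
        (∏ i ∈ S, pm (b i)) * g (fun i => pm (b i))) * ∏ i ∈ S, y i = g y := by
  classical
  set b₀ : Fin m → Bool := fun i => decide (y i = 1) with hb₀def
  have hpmb₀ : ∀ i, pm (b₀ i) = y i := by
    intro i
    rcases hy i with h | h <;> simp [pm, b₀, h] <;> norm_num
  have key : ∀ b : Fin m → Bool,
      ∑ S : Finset (Fin m), ∏ i ∈ S, (pm (b i) * y i) = if b = b₀ then (2:ℝ)^m else 0 := by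
    intro b
    have h1 : ∑ S : Finset (Fin m), ∏ i ∈ S, (pm (b i) * y i)
        = ∏ i, (pm (b i) * y i + 1) := by
      rw [Finset.prod_add]
      simp [Finset.powerset_univ]
    rw [h1]
    by_cases hb : b = b₀
    · subst hb
      rw [if_pos rfl]
      have h2 : ∀ i, pm (b₀ i) * y i + 1 = 2 := by
        intro i; rw [hpmb₀ i]; rcases hy i with h | h <;> rw [h] <;> norm_num
      rw [Finset.prod_congr rfl fun i _ => h2 i, Finset.prod_const]
      simp
    · rw [if_neg hb]
      obtain ⟨i, hi⟩ := Function.ne_iff.1 hb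
      apply Finset.prod_eq_zero (Finset.mem_univ i)
      rw [pm_mul_add_one _ _ (hy i), if_neg]
      intro h
      apply hi
      rw [← hpmb₀ i] at h
      cases hbi : b i <;> cases hb0i : b₀ i <;>
        simp [pm, hbi, hb0i] at h ⊢ <;> norm_num at h
  have h2m : ((2:ℝ)^m) ≠ 0 := by positivity
  calc ∑ S : Finset (Fin m),
      (((2 : ℝ) ^ m)⁻¹ * ∑ b : Fin m → Bool,
        (∏ i ∈ S, pm (b i)) * g (fun i => pm (b i))) * ∏ i ∈ S, y i
      = ∑ S : Finset (Fin m), ∑ b : Fin m → Bool,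
          ((2:ℝ)^m)⁻¹ * g (fun i => pm (b i)) * ∏ i ∈ S, (pm (b i) * y i) := by
        refine Finset.sum_congr rfl fun S _ => ?_
        rw [Finset.mul_sum, Finset.sum_mul]
        refine Finset.sum_congr rfl fun b _ => ?_
        rw [Finset.prod_mul_distrib]
        ring
    _ = ∑ b : Fin m → Bool, ∑ S : Finset (Fin m),
          ((2:ℝ)^m)⁻¹ * g (fun i => pm (b i)) * ∏ i ∈ S, (pm (b i) * y i) :=
        Finset.sum_comm
    _ = ∑ b : Fin m → Bool, ((2:ℝ)^m)⁻¹ * g (fun i => pm (b i)) *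
          ∑ S : Finset (Fin m), ∏ i ∈ S, (pm (b i) * y i) := by
        refine Finset.sum_congr rfl fun b _ => ?_
        rw [Finset.mul_sum]
    _ = ∑ b : Fin m → Bool, ((2:ℝ)^m)⁻¹ * g (fun i => pm (b i)) *
          (if b = b₀ then (2:ℝ)^m else 0) :=
        Finset.sum_congr rfl fun b _ => by rw [key b]
    _ = g y := by
        simp only [mul_ite, mul_zero]
        rw [Finset.sum_ite_eq' Finset.univ b₀
          (fun b => ((2:ℝ)^m)⁻¹ * g (fun i => pm (b i)) * (2:ℝ)^m)]
        have hfy : (fun i => pm (b₀ i)) = y := funext hpmb₀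
        simp only [Finset.mem_univ, if_pos, hfy]
        field_simp

lemma aA_empty (k : ℕ) (x : Fin d → ℝ) : aA Φ f k ∅ x = qA Φ f (k + 1) x := by
  simp [aA, qA]

lemma step (k : ℕ) (x : Fin d → ℝ) (y : Fin m → ℝ) (hy : ∀ i, y i = 1 ∨ y i = -1) :
    qA Φ f k (Φ x y) = qA Φ f (k + 1) x +
      ∑ S ∈ (Finset.univ : Finset (Finset (Fin m))).filter (fun S => S.Nonempty),
        aA Φ f k S x * ∏ i ∈ S, y i := by
  classical
  have hw := walsh (fun z => qA Φ f k (Φ x z)) y hy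
  have hrw : ∑ S : Finset (Fin m), aA Φ f k S x * ∏ i ∈ S, y i = qA Φ f k (Φ x y) := hw
  have hsplit := Finset.sum_filter_add_sum_filter_not (Finset.univ : Finset (Finset (Fin m)))
    (fun S => S.Nonempty) (fun S => aA Φ f k S x * ∏ i ∈ S, y i)
  have hempty : (Finset.univ : Finset (Finset (Fin m))).filter (fun S => ¬ S.Nonempty) = {∅} := by
    ext S; simp [Finset.not_nonempty_iff_eq_empty]
  rw [← hrw, ← hsplit, hempty, Finset.sum_singleton, aA_empty]
  simp [add_comm]

lemma measurable_qA (hΦ : Measurable fun p : (Fin d → ℝ) × (Fin m → ℝ) => Φ p.1 p.2)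
    (hf : Measurable f) : ∀ k, Measurable (qA Φ f k) := by
  intro k
  induction k with
  | zero => exact hf
  | succ k ih =>
    exact (Finset.measurable_sum _ fun b _ =>
      ih.comp (hΦ.comp (measurable_id.prodMk measurable_const))).const_mul _

lemma measurable_aA (hΦ : Measurable fun p : (Fin d → ℝ) × (Fin m → ℝ) => Φ p.1 p.2)
    (hf : Measurable f) (k : ℕ) (S : Finset (Fin m)) : Measurable (aA Φ f k S) := by
  exact (Finset.measurable_sum _ fun b _ =>
    (((measurable_qA Φ f hΦ hf k).comp
      (hΦ.comp (measurable_id.prodMk measurable_const))).const_mul _)).const_mul _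

variable {Ω : Type*} [MeasurableSpace Ω] (ξ : ℕ → Ω → Fin m → ℝ)

lemma measurable_XA (hΦ : Measurable fun p : (Fin d → ℝ) × (Fin m → ℝ) => Φ p.1 p.2)
    (hξmeas : ∀ j, Measurable (ξ j)) : ∀ n, Measurable (XA Φ x0 ξ n) := by
  intro n
  induction n with
  | zero => exact measurable_const
  | succ n ih => exact hΦ.comp (ih.prodMk (hξmeas (n + 1)))

lemma measurable_Yrec (hΦ : Measurable fun p : (Fin d → ℝ) × (Fin m → ℝ) => Φ p.1 p.2) :
    ∀ n, Measurable (Yrec Φ x0 n) := by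
  intro n
  induction n with
  | zero => exact measurable_const
  | succ n ih =>
    exact hΦ.comp (ih.prodMk
      (measurable_pi_lambda (fun u (i : Fin m) => u (n + 1, i))
        fun i => measurable_pi_apply (n + 1, i)))

lemma XA_eq_Yrec (n : ℕ) (ω : Ω) :
    XA Φ x0 ξ n ω = Yrec Φ x0 n (fun p => ξ p.1 ω p.2) := by
  induction n with
  | zero => rfl
  | succ n ih => simp only [XA, Yrec, ih]

lemma Yrec_congr (n : ℕ) (u u' : ℕ × Fin m → ℝ)
    (h : ∀ p : ℕ × Fin m, p.1 ∈ Finset.Icc 1 n → u p = u' p) :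
    Yrec Φ x0 n u = Yrec Φ x0 n u' := by
  induction n with
  | zero => rfl
  | succ n ih =>
    simp only [Yrec]
    rw [ih fun p hp => h p (Finset.Icc_subset_Icc_right (Nat.le_succ n) hp)]
    have hu : (fun i : Fin m => u (n + 1, i)) = fun i => u' (n + 1, i) :=
      funext fun i => h (n + 1, i) (by simp)
    rw [hu]

lemma Vset_nonempty (n : ℕ) : (Vset Φ x0 n).Nonempty := by
  induction n with
  | zero => exact ⟨x0, Finset.mem_singleton_self x0⟩
  | succ n ih =>
    obtain ⟨v, hv⟩ := ih
    exact ⟨_, Finset.mem_image_of_mem _ (Finset.mk_mem_product hv (Finset.mem_univ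
      (fun _ : Fin m => true)))⟩

lemma XA_mem_Vset (ω : Ω) (n : ℕ)
    (hω : ∀ j, j ∈ Finset.Icc 1 n → ∀ i, ξ j ω i = 1 ∨ ξ j ω i = -1) :
    XA Φ x0 ξ n ω ∈ Vset Φ x0 n := by
  induction n with
  | zero => simp [XA, Vset]
  | succ n ih =>
    have hx : XA Φ x0 ξ n ω ∈ Vset Φ x0 n :=
      ih fun j hj i => hω j (Finset.Icc_subset_Icc_right (Nat.le_succ n) hj) i
    have hy : ξ (n + 1) ω = fun i => pm (decide (ξ (n + 1) ω i = 1)) := by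
      funext i
      rcases hω (n + 1) (by simp) i with h | h <;> simp [pm, h] <;> norm_num
    show Φ (XA Φ x0 ξ n ω) (ξ (n + 1) ω) ∈ Vset Φ x0 (n + 1)
    rw [hy]
    exact Finset.mem_image_of_mem _ (Finset.mk_mem_product hx (Finset.mem_univ _))

lemma coins_ae (P : Measure Ω) (hξmeas : ∀ j, Measurable (ξ j))
    (hdist : ∀ j k, Measure.map (fun ω => ξ j ω k) P = coinLaw) :
    ∀ᵐ ω ∂P, ∀ j i, ξ j ω i = 1 ∨ ξ j ω i = -1 := by
  rw [ae_all_iff]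
  intro j
  rw [ae_all_iff]
  intro i
  have hm : Measurable fun ω => ξ j ω i := (measurable_pi_apply i).comp (hξmeas j)
  have hlaw : ∀ᵐ x ∂coinLaw, x = 1 ∨ x = -1 := by
    rw [ae_iff]
    have hs : MeasurableSet {x : ℝ | ¬ (x = 1 ∨ x = -1)} := by
      have he : {x : ℝ | ¬ (x = 1 ∨ x = -1)} = (({1} ∪ {-1} : Set ℝ))ᶜ := by
        ext x; simp [not_or]; tauto
      rw [he]
      exact ((measurableSet_singleton (1:ℝ)).union (measurableSet_singleton (-1:ℝ))).compl
    show coinLaw {a | ¬ (a = 1 ∨ a = -1)} = 0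
    rw [show coinLaw = (1/2 : ENNReal) • Measure.dirac (1:ℝ)
        + (1/2 : ENNReal) • Measure.dirac (-1:ℝ) from rfl]
    rw [Measure.add_apply, Measure.smul_apply, Measure.smul_apply,
      Measure.dirac_apply' _ hs, Measure.dirac_apply' _ hs]
    simp [Set.indicator_apply]
  have := hdist j i
  rw [← this] at hlaw
  exact ae_of_ae_map hm.aemeasurable hlaw

lemma integral_coin (P : Measure Ω) (hξmeas : ∀ j, Measurable (ξ j))
    (hdist : ∀ j k, Measure.map (fun ω => ξ j ω k) P = coinLaw) (j : ℕ) (i : Fin m) :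
    ∫ ω, ξ j ω i ∂P = 0 := by
  have hm : Measurable fun ω => ξ j ω i := (measurable_pi_apply i).comp (hξmeas j)
  have h1 : ∫ ω, ξ j ω i ∂P = ∫ x, x ∂(Measure.map (fun ω => ξ j ω i) P) :=
    (integral_map hm.aemeasurable aestronglyMeasurable_id).symm
  rw [h1, hdist j i]
  have hdir : ∀ c : ℝ, Integrable (fun x : ℝ => x) (Measure.dirac c) := fun c =>
    (integrable_const c).congr (ae_eq_dirac (fun x : ℝ => x)).symm
  have hd1 : Integrable (fun x : ℝ => x) ((1/2 : ENNReal) • Measure.dirac (1:ℝ)) :=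
    (hdir 1).smul_measure (by norm_num)
  have hd2 : Integrable (fun x : ℝ => x) ((1/2 : ENNReal) • Measure.dirac (-1:ℝ)) :=
    (hdir (-1)).smul_measure (by norm_num)
  rw [show coinLaw = (1/2 : ENNReal) • Measure.dirac (1:ℝ)
      + (1/2 : ENNReal) • Measure.dirac (-1:ℝ) from rfl,
    integral_add_measure hd1 hd2, integral_smul_measure, integral_smul_measure,
    integral_dirac, integral_dirac]
  norm_num [ENNReal.toReal_div]

lemma integral_prod_coin_zero (P : Measure Ω) [IsProbabilityMeasure P]
    (hξmeas : ∀ j, Measurable (ξ j))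
    (hindep : iIndepFun
      (fun p : ℕ × Fin m => fun ω => ξ p.1 ω p.2) P)
    (hdist : ∀ j k, Measure.map (fun ω => ξ j ω k) P = coinLaw)
    (j : ℕ) (S : Finset (Fin m)) (hS : S.Nonempty) :
    ∫ ω, ∏ i ∈ S, ξ j ω i ∂P = 0 := by
  classical
  obtain ⟨i₀, hi₀⟩ := hS
  have hdisj : Disjoint ({(j, i₀)} : Finset (ℕ × Fin m)) (({j} : Finset ℕ) ×ˢ S.erase i₀) := by
    rw [Finset.disjoint_left]
    rintro p hp hpB
    rw [Finset.mem_singleton] at hp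
    subst hp
    rw [Finset.mem_product] at hpB
    exact absurd hpB.2 (by simp)
  have hbase := hindep.indepFun_finset _ _ hdisj
    (fun p => (measurable_pi_apply p.2).comp (hξmeas p.1))
  have hφ : Measurable (fun v : ({x // x ∈ ({(j, i₀)} : Finset (ℕ × Fin m))} → ℝ) =>
      v ⟨(j, i₀), Finset.mem_singleton_self _⟩) := measurable_pi_apply _
  have hψ : Measurable (fun v : ({x // x ∈ (({j} : Finset ℕ) ×ˢ S.erase i₀)} → ℝ) =>
      ∏ p ∈ (({j} : Finset ℕ) ×ˢ S.erase i₀).attach, v p) :=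
    Finset.measurable_prod _ fun p _ => measurable_pi_apply _
  have hIF := hbase.comp hφ hψ
  have hXeq : ((fun v : ({x // x ∈ ({(j, i₀)} : Finset (ℕ × Fin m))} → ℝ) =>
        v ⟨(j, i₀), Finset.mem_singleton_self _⟩) ∘
      (fun ω (p : {x // x ∈ ({(j, i₀)} : Finset (ℕ × Fin m))}) => ξ (↑p : ℕ × Fin m).1 ω (↑p : ℕ × Fin m).2))
      = fun ω => ξ j ω i₀ := rfl
  have hYeq : ((fun v : ({x // x ∈ (({j} : Finset ℕ) ×ˢ S.erase i₀)} → ℝ) =>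
        ∏ p ∈ (({j} : Finset ℕ) ×ˢ S.erase i₀).attach, v p) ∘
      (fun ω (p : {x // x ∈ (({j} : Finset ℕ) ×ˢ S.erase i₀)}) => ξ (↑p : ℕ × Fin m).1 ω (↑p : ℕ × Fin m).2))
      = fun ω => ∏ i ∈ S.erase i₀, ξ j ω i := by
    funext ω
    simp only [Function.comp]
    rw [Finset.prod_attach (({j} : Finset ℕ) ×ˢ S.erase i₀) (fun p => ξ p.1 ω p.2),
      Finset.prod_product, Finset.prod_singleton]
  rw [hXeq, hYeq] at hIF
  have hXm : Measurable fun ω => ξ j ω i₀ := (measurable_pi_apply i₀).comp (hξmeas j)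
  have hYm : Measurable fun ω => ∏ i ∈ S.erase i₀, ξ j ω i :=
    Finset.measurable_prod _ fun i _ => (measurable_pi_apply i).comp (hξmeas j)
  have hsplit : (fun ω => ∏ i ∈ S, ξ j ω i)
      = ((fun ω => ξ j ω i₀) * fun ω => ∏ i ∈ S.erase i₀, ξ j ω i) := by
    funext ω
    simp only [Pi.mul_apply]
    exact (Finset.mul_prod_erase S _ hi₀).symm
  show (∫ ω, ∏ i ∈ S, ξ j ω i ∂P) = 0
  rw [hsplit, hIF.integral_mul_eq_mul_integral hXm.aestronglyMeasurable hYm.aestronglyMeasurable,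
    integral_coin ξ P hξmeas hdist j i₀, zero_mul]

lemma integral_term_zero (P : Measure Ω) [IsProbabilityMeasure P]
    (hξmeas : ∀ j, Measurable (ξ j))
    (hindep : iIndepFun
      (fun p : ℕ × Fin m => fun ω => ξ p.1 ω p.2) P)
    (hdist : ∀ j k, Measure.map (fun ω => ξ j ω k) P = coinLaw)
    (hΦ : Measurable fun p : (Fin d → ℝ) × (Fin m → ℝ) => Φ p.1 p.2)
    (hf : Measurable f) (J j : ℕ) (hj : 1 ≤ j) (S : Finset (Fin m)) (hS : S.Nonempty) :
    ∫ ω, aA Φ f (J - j) S (XA Φ x0 ξ (j - 1) ω) * ∏ i ∈ S, ξ j ω i ∂P = 0 := by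
  classical
  have hdisj : Disjoint (Finset.Icc 1 (j-1) ×ˢ (Finset.univ : Finset (Fin m)))
      (({j} : Finset ℕ) ×ˢ S) := by
    rw [Finset.disjoint_left]
    rintro ⟨a, i⟩ hA hB
    rw [Finset.mem_product, Finset.mem_Icc] at hA
    rw [Finset.mem_product, Finset.mem_singleton] at hB
    omega
  have hbase := hindep.indepFun_finset _ _ hdisj
    (fun p => (measurable_pi_apply p.2).comp (hξmeas p.1))
  have hext : Measurable (fun (v : {x // x ∈ Finset.Icc 1 (j-1) ×ˢ (Finset.univ : Finset (Fin m))} → ℝ)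
      (p : ℕ × Fin m) => if h : p ∈ Finset.Icc 1 (j-1) ×ˢ (Finset.univ : Finset (Fin m))
        then v ⟨p, h⟩ else 0) := by
    refine measurable_pi_lambda _ fun p => ?_
    by_cases h : p ∈ Finset.Icc 1 (j-1) ×ˢ (Finset.univ : Finset (Fin m))
    · simp only [dif_pos h]; exact measurable_pi_apply _
    · simp only [dif_neg h]; exact measurable_const
  have hφ : Measurable (fun v : ({x // x ∈ Finset.Icc 1 (j-1) ×ˢ (Finset.univ : Finset (Fin m))} → ℝ) =>
      aA Φ f (J - j) S (Yrec Φ x0 (j-1) (fun p => if h : p ∈ Finset.Icc 1 (j-1) ×ˢ (Finset.univ : Finset (Fin m))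
        then v ⟨p, h⟩ else 0))) :=
    (measurable_aA Φ f hΦ hf _ _).comp ((measurable_Yrec Φ x0 hΦ (j-1)).comp hext)
  have hψ : Measurable (fun v : ({x // x ∈ (({j} : Finset ℕ) ×ˢ S)} → ℝ) =>
      ∏ p ∈ (({j} : Finset ℕ) ×ˢ S).attach, v p) :=
    Finset.measurable_prod _ fun p _ => measurable_pi_apply _
  have hIF := hbase.comp hφ hψ
  have hXeq : ((fun v : ({x // x ∈ Finset.Icc 1 (j-1) ×ˢ (Finset.univ : Finset (Fin m))} → ℝ) =>
      aA Φ f (J - j) S (Yrec Φ x0 (j-1) (fun p => if h : p ∈ Finset.Icc 1 (j-1) ×ˢ (Finset.univ : Finset (Fin m))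
        then v ⟨p, h⟩ else 0))) ∘
      (fun ω (p : {x // x ∈ Finset.Icc 1 (j-1) ×ˢ (Finset.univ : Finset (Fin m))}) =>
        ξ (↑p : ℕ × Fin m).1 ω (↑p : ℕ × Fin m).2))
      = fun ω => aA Φ f (J - j) S (XA Φ x0 ξ (j - 1) ω) := by
    funext ω
    simp only [Function.comp]
    congr 1
    rw [XA_eq_Yrec Φ x0 ξ (j-1) ω]
    refine Yrec_congr Φ x0 (j-1) _ _ fun p hp => ?_
    have hpA : p ∈ Finset.Icc 1 (j-1) ×ˢ (Finset.univ : Finset (Fin m)) :=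
      Finset.mem_product.mpr ⟨hp, Finset.mem_univ _⟩
    simp only [dif_pos hpA]
  have hYeq : ((fun v : ({x // x ∈ (({j} : Finset ℕ) ×ˢ S)} → ℝ) =>
        ∏ p ∈ (({j} : Finset ℕ) ×ˢ S).attach, v p) ∘
      (fun ω (p : {x // x ∈ (({j} : Finset ℕ) ×ˢ S)}) => ξ (↑p : ℕ × Fin m).1 ω (↑p : ℕ × Fin m).2))
      = fun ω => ∏ i ∈ S, ξ j ω i := by
    funext ω
    simp only [Function.comp]
    rw [Finset.prod_attach (({j} : Finset ℕ) ×ˢ S) (fun p => ξ p.1 ω p.2),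
      Finset.prod_product, Finset.prod_singleton]
  rw [hXeq, hYeq] at hIF
  have hXm : Measurable fun ω => aA Φ f (J - j) S (XA Φ x0 ξ (j - 1) ω) :=
    (measurable_aA Φ f hΦ hf _ _).comp (measurable_XA Φ x0 ξ hΦ hξmeas (j-1))
  have hYm : Measurable fun ω => ∏ i ∈ S, ξ j ω i :=
    Finset.measurable_prod _ fun i _ => (measurable_pi_apply i).comp (hξmeas j)
  have hmul : (fun ω => aA Φ f (J - j) S (XA Φ x0 ξ (j - 1) ω) * ∏ i ∈ S, ξ j ω i)
      = ((fun ω => aA Φ f (J - j) S (XA Φ x0 ξ (j - 1) ω)) * fun ω => ∏ i ∈ S, ξ j ω i) := rfl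
  show (∫ ω, aA Φ f (J - j) S (XA Φ x0 ξ (j - 1) ω) * ∏ i ∈ S, ξ j ω i ∂P) = 0
  rw [hmul, hIF.integral_mul_eq_mul_integral hXm.aestronglyMeasurable hYm.aestronglyMeasurable,
    integral_prod_coin_zero ξ P hξmeas hindep hdist j S hS, mul_zero]

end Aux

/-- Almost surely,
`f(X_{Δ,T}) = E[f(X_{Δ,T})] + Σ_{j=1}^J Σ_{∅ ≠ S ⊆ {1,…,m}} a_{j,S}(X_{Δ,(j-1)Δ}) Π_{i∈S} ξ_j^i`,
and moreover `E[f(X_{Δ,T})] = q_0(x_0)`. -/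
theorem stmt0
    {d m : ℕ} (T : ℝ) (hT : 0 < T) (x0 : Fin d → ℝ) (J : ℕ) (hJ : 1 ≤ J)
    {Ω : Type*} [MeasurableSpace Ω] (P : Measure Ω) [IsProbabilityMeasure P]
    (ξ : ℕ → Ω → Fin m → ℝ) (hξmeas : ∀ j, Measurable (ξ j))
    (hindep : iIndepFun
      (fun p : ℕ × Fin m => fun ω => ξ p.1 ω p.2) P)
    (hdist : ∀ j k, Measure.map (fun ω => ξ j ω k) P = coinLaw)
    (Φ : (Fin d → ℝ) → (Fin m → ℝ) → Fin d → ℝ)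
    (hΦ : Measurable fun p : (Fin d → ℝ) × (Fin m → ℝ) => Φ p.1 p.2)
    (f : (Fin d → ℝ) → ℝ) (hf : Measurable f) :
    (∀ᵐ ω ∂P, f (XA Φ x0 ξ J ω)
        = (∫ ω', f (XA Φ x0 ξ J ω') ∂P)
          + ∑ j ∈ Finset.Icc 1 J,
              ∑ S ∈ (Finset.univ : Finset (Finset (Fin m))).filter (fun S => S.Nonempty),
                aA Φ f (J - j) S (XA Φ x0 ξ (j - 1) ω) * ∏ i ∈ S, ξ j ω i)
      ∧ (∫ ω', f (XA Φ x0 ξ J ω') ∂P) = qA Φ f J x0 := by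
  classical
  have hgood := coins_ae ξ P hξmeas hdist
  -- telescoping identity, pointwise on the good event
  have tel : ∀ ω, (∀ j i, ξ j ω i = 1 ∨ ξ j ω i = -1) → ∀ n, n ≤ J →
      qA Φ f (J - n) (XA Φ x0 ξ n ω) = qA Φ f J x0 +
        ∑ j ∈ Finset.Icc 1 n,
          ∑ S ∈ (Finset.univ : Finset (Finset (Fin m))).filter (fun S => S.Nonempty),
            aA Φ f (J - j) S (XA Φ x0 ξ (j - 1) ω) * ∏ i ∈ S, ξ j ω i := by
    intro ω hω n
    induction n with
    | zero => intro _; simp [XA]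
    | succ n ih =>
      intro hn
      have hn' : n ≤ J := Nat.le_of_succ_le hn
      have hstep := step Φ f (J - (n + 1)) (XA Φ x0 ξ n ω) (ξ (n + 1) ω) (hω (n + 1))
      have hidx : J - (n + 1) + 1 = J - n := by omega
      rw [hidx] at hstep
      show qA Φ f (J - (n + 1)) (Φ (XA Φ x0 ξ n ω) (ξ (n + 1) ω)) = _
      rw [hstep, ih hn', Finset.sum_Icc_succ_top (Nat.succ_le_succ (Nat.zero_le n))]
      simp only [Nat.add_sub_cancel]
      ring
  have telJ : ∀ᵐ ω ∂P, f (XA Φ x0 ξ J ω) = qA Φ f J x0 +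
      ∑ j ∈ Finset.Icc 1 J,
        ∑ S ∈ (Finset.univ : Finset (Finset (Fin m))).filter (fun S => S.Nonempty),
          aA Φ f (J - j) S (XA Φ x0 ξ (j - 1) ω) * ∏ i ∈ S, ξ j ω i := by
    filter_upwards [hgood] with ω hω
    have h := tel ω hω J le_rfl
    rw [Nat.sub_self] at h
    exact h
  -- integrability of each term
  have hterm_int : ∀ j, ∀ S : Finset (Fin m), Integrable
      (fun ω => aA Φ f (J - j) S (XA Φ x0 ξ (j - 1) ω) * ∏ i ∈ S, ξ j ω i) P := by
    intro j S
    constructor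
    · exact (((measurable_aA Φ f hΦ hf _ _).comp
        (measurable_XA Φ x0 ξ hΦ hξmeas (j - 1))).mul
        (Finset.measurable_prod _ fun i _ =>
          (measurable_pi_apply i).comp (hξmeas j))).aestronglyMeasurable
    · apply HasFiniteIntegral.of_bounded
        (C := ∑ v ∈ Vset Φ x0 (j - 1), |aA Φ f (J - j) S v|)
      filter_upwards [hgood] with ω hω
      have hmem := XA_mem_Vset Φ x0 ξ ω (j - 1) (fun j' _ i => hω j' i)
      have habs : |∏ i ∈ S, ξ j ω i| = 1 := by
        rw [Finset.abs_prod]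
        refine Finset.prod_eq_one fun i _ => ?_
        rcases hω j i with h | h <;> rw [h] <;> norm_num
      rw [Real.norm_eq_abs, abs_mul, habs, mul_one]
      exact Finset.single_le_sum (f := fun v => |aA Φ f (J - j) S v|) (fun v _ => abs_nonneg _) hmem
  have hsum_int : Integrable (fun ω => ∑ j ∈ Finset.Icc 1 J,
      ∑ S ∈ (Finset.univ : Finset (Finset (Fin m))).filter (fun S => S.Nonempty),
        aA Φ f (J - j) S (XA Φ x0 ξ (j - 1) ω) * ∏ i ∈ S, ξ j ω i) P :=
    integrable_finset_sum _ fun j _ => integrable_finset_sum _ fun S _ => hterm_int j S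
  have hE : (∫ ω', f (XA Φ x0 ξ J ω') ∂P) = qA Φ f J x0 := by
    rw [integral_congr_ae telJ, integral_add (integrable_const _) hsum_int, integral_const]
    have hzero : ∀ j ∈ Finset.Icc 1 J, (∫ ω,
        ∑ S ∈ (Finset.univ : Finset (Finset (Fin m))).filter (fun S => S.Nonempty),
          aA Φ f (J - j) S (XA Φ x0 ξ (j - 1) ω) * ∏ i ∈ S, ξ j ω i ∂P) = 0 := by
      intro j hj
      rw [integral_finset_sum _ fun S _ => hterm_int j S]
      refine Finset.sum_eq_zero fun S hS => ?_
      exact integral_term_zero Φ f x0 ξ P hξmeas hindep hdist hΦ hf J j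
        (Finset.mem_Icc.1 hj).1 S (Finset.mem_filter.1 hS).2
    rw [integral_finset_sum _ fun j _ =>
      integrable_finset_sum _ fun S _ => hterm_int j S]
    rw [Finset.sum_congr rfl hzero, Finset.sum_const_zero]
    simp
  refine ⟨?_, hE⟩
  filter_upwards [telJ] with ω h
  rw [hE, h]

end
end

section
/- Suppose all entries σ^{ki} (k=1,…,d, i=1,…,m) are bounded functions, and f and all entries μ^k, σ^{ki} are continuously differentiable with bounded partial derivatives. Then there exists a constant A>0, depending only on d, m, T, f, μ and σ (in particular independent of J), such that for every J∈ℕ, every j∈{1,…,J}, every r∈{1,…,m} and every 1≤s_1<…<s_r≤m, sup_{x∈ℝ^d} |a_{j,r,s}(x)| ≤ A√Δ. -/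
open MeasureTheory ProbabilityTheory Finset

noncomputable section

/-- The simplified weak Euler scheme map `Φ_Δ(x,y) = x + μ(x)Δ + σ(x)y√Δ`. -/
def PhiE {d m : ℕ} (μc : (Fin d → ℝ) → Fin d → ℝ)
    (σc : (Fin d → ℝ) → Fin d → Fin m → ℝ) (Δ : ℝ)
    (x : Fin d → ℝ) (y : Fin m → ℝ) : Fin d → ℝ :=
  fun k => x k + μc x k * Δ + Real.sqrt Δ * ∑ i, σc x k i * y i

/-- `g` is `K` times continuously differentiable with bounded partial derivatives
up to order `K`. -/
def HasBddDerivs {d : ℕ} (K : ℕ) (g : (Fin d → ℝ) → ℝ) : Prop :=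
  ContDiff ℝ (K : ℕ∞) g ∧ ∃ C, ∀ i, 1 ≤ i → i ≤ K → ∀ x, ‖iteratedFDeriv ℝ i g x‖ ≤ C

lemma pm_not (y : Bool) : pm (!y) = - pm y := by cases y <;> simp [pm]
lemma pm_sq (y : Bool) : pm y * pm y = 1 := by cases y <;> norm_num [pm]
lemma pm_abs (y : Bool) : |pm y| = 1 := by cases y <;> norm_num [pm]

def flipE {m : ℕ} (i : Fin m) : (Fin m → Bool) ≃ (Fin m → Bool) where
  toFun b := Function.update b i (!(b i))
  invFun b := Function.update b i (!(b i))
  left_inv b := by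
    funext j
    by_cases h : j = i
    · subst h; simp
    · simp [Function.update_of_ne h]
  right_inv b := by
    funext j
    by_cases h : j = i
    · subst h; simp
    · simp [Function.update_of_ne h]

lemma sum_flip {m : ℕ} (i : Fin m) (g : (Fin m → Bool) → ℝ) :
    ∑ b : Fin m → Bool, g b = ∑ b : Fin m → Bool, g (Function.update b i (!(b i))) :=
  (Fintype.sum_equiv (flipE i) _ _ fun b => rfl).symm

lemma sum_pm_single {m : ℕ} (i : Fin m) (h : (Fin m → Bool) → ℝ)
    (hh : ∀ b v, h (Function.update b i v) = h b) :
    ∑ b : Fin m → Bool, pm (b i) * h b = 0 := by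
  have := sum_flip i (fun b => pm (b i) * h b)
  have h2 : ∀ b : Fin m → Bool,
      pm (Function.update b i (!(b i)) i) * h (Function.update b i (!(b i)))
        = - (pm (b i) * h b) := by
    intro b
    rw [Function.update_self, pm_not, hh]
    ring
  rw [Finset.sum_congr rfl (fun b _ => h2 b)] at this
  rw [Finset.sum_neg_distrib] at this
  linarith

lemma sum_pm_one {m : ℕ} (i : Fin m) : ∑ b : Fin m → Bool, pm (b i) = 0 := by
  simpa using sum_pm_single i (fun _ => 1) (fun _ _ => rfl)

lemma sum_pm_pair {m : ℕ} (i i' : Fin m) :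
    ∑ b : Fin m → Bool, pm (b i) * pm (b i')
      = if i = i' then (2:ℝ)^m else 0 := by
  by_cases h : i = i'
  · subst h
    simp only [if_pos rfl]
    rw [Finset.sum_congr rfl (fun b _ => pm_sq (b i))]
    simp [Fintype.card_fun]
  · rw [if_neg h]
    exact sum_pm_single i (fun b => pm (b i'))
      (fun b v => by simp [Function.update_of_ne (Ne.symm h)])


lemma key_avg {d m : ℕ} (A : Fin d → ℝ) (s : Fin d → Fin m → ℝ) (c : ℝ) :
    ∑ b : Fin m → Bool, ∑ k, (A k + c * ∑ i, s k i * pm (b i))^2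
      = (2:ℝ)^m * (∑ k, (A k)^2 + c^2 * ∑ k, ∑ i, (s k i)^2) := by
  rw [Finset.sum_comm]
  have hk : ∀ k : Fin d,
      ∑ b : Fin m → Bool, (A k + c * ∑ i, s k i * pm (b i))^2
        = (2:ℝ)^m * ((A k)^2 + c^2 * ∑ i, (s k i)^2) := by
    intro k
    have expand : ∀ b : Fin m → Bool,
        (A k + c * ∑ i, s k i * pm (b i))^2
          = (A k)^2 + (2 * A k * c) * (∑ i, s k i * pm (b i))
            + c^2 * ((∑ i, s k i * pm (b i)) * (∑ i', s k i' * pm (b i'))) := by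
      intro b; ring
    rw [Finset.sum_congr rfl (fun b _ => expand b), Finset.sum_add_distrib,
      Finset.sum_add_distrib]
    have h1 : ∑ b : Fin m → Bool, (A k)^2 = (2:ℝ)^m * (A k)^2 := by
      simp [Fintype.card_fun, mul_comm]
    have h2 : ∑ b : Fin m → Bool, (2 * A k * c) * (∑ i, s k i * pm (b i)) = 0 := by
      rw [← Finset.mul_sum, Finset.sum_comm]
      have : ∀ i : Fin m, ∑ b : Fin m → Bool, s k i * pm (b i) = 0 := by
        intro i; rw [← Finset.mul_sum, sum_pm_one, mul_zero]
      rw [Finset.sum_congr rfl (fun i _ => this i)]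
      simp
    have h3 : ∑ b : Fin m → Bool,
        c^2 * ((∑ i, s k i * pm (b i)) * (∑ i', s k i' * pm (b i')))
          = (2:ℝ)^m * (c^2 * ∑ i, (s k i)^2) := by
      rw [← Finset.mul_sum]
      have : ∑ b : Fin m → Bool, (∑ i, s k i * pm (b i)) * (∑ i', s k i' * pm (b i'))
          = (2:ℝ)^m * ∑ i, (s k i)^2 := by
        have e1 : ∀ b : Fin m → Bool,
            (∑ i, s k i * pm (b i)) * (∑ i', s k i' * pm (b i'))
              = ∑ i, ∑ i', (s k i * s k i') * (pm (b i) * pm (b i')) := by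
          intro b
          rw [Finset.sum_mul_sum]
          exact Finset.sum_congr rfl fun i _ => Finset.sum_congr rfl fun i' _ => by ring
        rw [Finset.sum_congr rfl (fun b _ => e1 b), Finset.sum_comm]
        have e2 : ∀ i : Fin m,
            ∑ b : Fin m → Bool, ∑ i', (s k i * s k i') * (pm (b i) * pm (b i'))
              = (2:ℝ)^m * (s k i)^2 := by
          intro i
          rw [Finset.sum_comm]
          have e3 : ∀ i' : Fin m,
              ∑ b : Fin m → Bool, (s k i * s k i') * (pm (b i) * pm (b i'))
                = (s k i * s k i') * (if i = i' then (2:ℝ)^m else 0) := by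
            intro i'; rw [← Finset.mul_sum, sum_pm_pair]
          rw [Finset.sum_congr rfl (fun i' _ => e3 i')]
          simp only [mul_ite, mul_zero]
          rw [Finset.sum_ite_eq Finset.univ i (fun i' => s k i * s k i' * (2:ℝ)^m)]
          simp [sq]; ring
        rw [Finset.sum_congr rfl (fun i _ => e2 i), ← Finset.mul_sum]
      rw [this]; ring
    rw [h1, h2, h3]; ring
  rw [Finset.sum_congr rfl (fun k _ => hk k), ← Finset.mul_sum, Finset.sum_add_distrib,
    ← Finset.mul_sum]


noncomputable def sq2 {d : ℕ} (w : Fin d → ℝ) : ℝ := ∑ k, w k ^ 2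

lemma sq2_nonneg {d : ℕ} (w : Fin d → ℝ) : 0 ≤ sq2 w :=
  Finset.sum_nonneg fun _ _ => sq_nonneg _

lemma wsq (t a b : ℝ) (ht : 0 < t) : (a+b)^2 ≤ (1+t)*a^2 + (1+t⁻¹)*b^2 := by
  have h1 : t * t⁻¹ = 1 := mul_inv_cancel₀ ht.ne'
  have h2 : (0:ℝ) ≤ t⁻¹ := by positivity
  nlinarith [sq_nonneg (t*a - b), mul_nonneg h2 (sq_nonneg (t*a - b))]

lemma step_sum {d m : ℕ} (μc : (Fin d → ℝ) → Fin d → ℝ)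
    (σc : (Fin d → ℝ) → Fin d → Fin m → ℝ) (Δ T L : ℝ)
    (hΔ : 0 < Δ) (hΔT : Δ ≤ T)
    (hmL : ∀ k u v, (μc u k - μc v k)^2 ≤ L^2 * sq2 (fun k' => u k' - v k'))
    (hsL : ∀ k i u v, (σc u k i - σc v k i)^2 ≤ L^2 * sq2 (fun k' => u k' - v k'))
    (u v : Fin d → ℝ) :
    ∑ b : Fin m → Bool,
        sq2 (fun k => PhiE μc σc Δ u (fun i => pm (b i)) k
                      - PhiE μc σc Δ v (fun i => pm (b i)) k)
      ≤ (2:ℝ)^m * ((1 + (1 + d*(1+T)*L^2 + d*m*L^2) * Δ)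
          * sq2 (fun k' => u k' - v k')) := by
  set A : Fin d → ℝ := fun k => (u k - v k) + (μc u k - μc v k) * Δ with hA
  set s : Fin d → Fin m → ℝ := fun k i => σc u k i - σc v k i with hs
  have hrw : ∀ b : Fin m → Bool,
      sq2 (fun k => PhiE μc σc Δ u (fun i => pm (b i)) k
                    - PhiE μc σc Δ v (fun i => pm (b i)) k)
        = ∑ k, (A k + Real.sqrt Δ * ∑ i, s k i * pm (b i))^2 := by
    intro b
    unfold sq2
    refine Finset.sum_congr rfl fun k _ => ?_
    have : (∑ i, s k i * pm (b i))
        = (∑ i, σc u k i * pm (b i)) - ∑ i, σc v k i * pm (b i) := by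
      rw [← Finset.sum_sub_distrib]
      exact Finset.sum_congr rfl fun i _ => by rw [hs]; ring
    rw [this]
    simp only [PhiE, hA]
    ring
  rw [Finset.sum_congr rfl fun b _ => hrw b, key_avg,
    Real.sq_sqrt hΔ.le]
  have hD := sq2_nonneg (fun k' => u k' - v k')
  set D2 := sq2 (fun k' => u k' - v k') with hD2
  refine mul_le_mul_of_nonneg_left ?_ (by positivity)
  have hA2 : ∑ k, (A k)^2 ≤ (1+Δ) * D2 + d * ((Δ + Δ^2) * (L^2 * D2)) := by
    have hk : ∀ k : Fin d, (A k)^2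
        ≤ (1+Δ) * (u k - v k)^2 + (Δ + Δ^2) * (L^2 * D2) := by
      intro k
      have h1 := wsq Δ (u k - v k) ((μc u k - μc v k) * Δ) hΔ
      have h2 := hmL k u v
      have h3 : (1+Δ⁻¹) * ((μc u k - μc v k) * Δ)^2
          = (Δ + Δ^2) * (μc u k - μc v k)^2 := by
        field_simp; ring
      have h4 : (0:ℝ) ≤ Δ + Δ^2 := by positivity
      rw [← hD2] at h2
      simp only [hA]
      nlinarith [mul_le_mul_of_nonneg_left h2 h4]
    calc ∑ k, (A k)^2 ≤ ∑ k : Fin d, ((1+Δ) * (u k - v k)^2 + (Δ + Δ^2) * (L^2 * D2)) :=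
          Finset.sum_le_sum fun k _ => hk k
      _ = (1+Δ) * D2 + d * ((Δ + Δ^2) * (L^2 * D2)) := by
          rw [Finset.sum_add_distrib, ← Finset.mul_sum]
          simp [hD2, sq2, Finset.sum_const, Finset.card_univ, nsmul_eq_mul]
  have hs2 : ∑ k, ∑ i, (s k i)^2 ≤ d * (m * (L^2 * D2)) := by
    calc ∑ k, ∑ i, (s k i)^2 ≤ ∑ k : Fin d, ∑ i : Fin m, L^2 * D2 :=
          Finset.sum_le_sum fun k _ => Finset.sum_le_sum fun i _ => hsL k i u v
      _ = d * (m * (L^2 * D2)) := by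
          simp [Finset.sum_const, Finset.card_univ, nsmul_eq_mul, mul_assoc]
  have hΔ2 : Δ + Δ^2 ≤ (1+T) * Δ := by nlinarith
  have hL2 : (0:ℝ) ≤ L^2 * D2 := by positivity
  have hdm : (0:ℝ) ≤ (d:ℝ) := by positivity
  have hmm : (0:ℝ) ≤ (m:ℝ) := by positivity
  nlinarith [mul_le_mul_of_nonneg_left hΔ2 (mul_nonneg hdm hL2),
    mul_le_mul_of_nonneg_left hs2 hΔ.le]


lemma lip_of {d : ℕ} {g : (Fin d → ℝ) → ℝ} (hg : HasBddDerivs 1 g) :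
    ∃ L ≥ (0:ℝ), ∀ u v, |g u - g v| ≤ L * ‖u - v‖ := by
  obtain ⟨hsm, C, hC⟩ := hg
  refine ⟨max C 0, le_max_right _ _, fun u v => ?_⟩
  have hd : ∀ x : Fin d → ℝ, DifferentiableAt ℝ g x := fun x =>
    (hsm.differentiable (by norm_num)).differentiableAt
  have hfd : ∀ x : Fin d → ℝ, ‖fderiv ℝ g x‖ ≤ max C 0 := by
    intro x
    refine ContinuousLinearMap.opNorm_le_bound _ (le_max_right _ _) fun y => ?_
    have h1 : fderiv ℝ g x y = iteratedFDeriv ℝ 1 g x (fun _ => y) := by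
      rw [iteratedFDeriv_one_apply]
    rw [Real.norm_eq_abs] at *
    calc |fderiv ℝ g x y| = ‖iteratedFDeriv ℝ 1 g x (fun _ => y)‖ := by rw [h1]; rfl
      _ ≤ ‖iteratedFDeriv ℝ 1 g x‖ * ∏ _i : Fin 1, ‖y‖ :=
          (iteratedFDeriv ℝ 1 g x).le_opNorm _
      _ ≤ max C 0 * ‖y‖ := by
          simp only [Finset.prod_const, Finset.card_univ, Fintype.card_fin, pow_one]
          exact mul_le_mul_of_nonneg_right ((hC 1 le_rfl le_rfl x).trans (le_max_left _ _))
            (norm_nonneg _)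
  have := Convex.norm_image_sub_le_of_norm_fderiv_le (fun x _ => hd x)
    (fun x _ => hfd x) convex_univ (Set.mem_univ v) (Set.mem_univ u)
  simpa [Real.norm_eq_abs] using this


lemma q_sq {d m : ℕ} (μc : (Fin d → ℝ) → Fin d → ℝ)
    (σc : (Fin d → ℝ) → Fin d → Fin m → ℝ) (f : (Fin d → ℝ) → ℝ)
    (Δ T L Lf : ℝ) (hT : 0 < T) (hΔ : 0 < Δ) (hΔT : Δ ≤ T)
    (hmL : ∀ k u v, (μc u k - μc v k)^2 ≤ L^2 * sq2 (fun k' => u k' - v k'))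
    (hsL : ∀ k i u v, (σc u k i - σc v k i)^2 ≤ L^2 * sq2 (fun k' => u k' - v k'))
    (hfL : ∀ u v, (f u - f v)^2 ≤ Lf^2 * sq2 (fun k' => u k' - v k')) :
    ∀ k u v, (qA (PhiE μc σc Δ) f k u - qA (PhiE μc σc Δ) f k v)^2
      ≤ Lf^2 * (1 + (1 + d*(1+T)*L^2 + d*m*L^2) * Δ)^k * sq2 (fun k' => u k' - v k') := by
  set c : ℝ := 1 + d*(1+T)*L^2 + d*m*L^2 with hc
  have hc0 : 0 ≤ c := by
    have hc1 : (0:ℝ) ≤ d*(1+T)*L^2 :=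
      mul_nonneg (mul_nonneg (by positivity) (by linarith)) (sq_nonneg L)
    have hc2 : (0:ℝ) ≤ (d:ℝ)*m*L^2 := by positivity
    linarith
  have h1cΔ : (0:ℝ) ≤ 1 + c*Δ := by nlinarith
  intro k
  induction k with
  | zero => intro u v; simpa [qA] using hfL u v
  | succ k ih =>
    intro u v
    set Φ := PhiE μc σc Δ with hΦ
    have hq : qA Φ f (k+1) u - qA Φ f (k+1) v
        = ((2:ℝ)^m)⁻¹ * ∑ b : Fin m → Bool,
            (qA Φ f k (Φ u fun i => pm (b i)) - qA Φ f k (Φ v fun i => pm (b i))) := by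
      rw [Finset.sum_sub_distrib, mul_sub]
      rfl
    rw [hq, mul_pow]
    have hcard : ((Finset.univ : Finset (Fin m → Bool)).card : ℝ) = (2:ℝ)^m := by
      rw [Finset.card_univ, Fintype.card_fun]
      push_cast [Fintype.card_bool, Fintype.card_fin]
      ring
    have hCS := sq_sum_le_card_mul_sum_sq (s := (Finset.univ : Finset (Fin m → Bool)))
      (f := fun b => qA Φ f k (Φ u fun i => pm (b i)) - qA Φ f k (Φ v fun i => pm (b i)))
    rw [hcard] at hCS
    have hsum : ∑ b : Fin m → Bool,
        (qA Φ f k (Φ u fun i => pm (b i)) - qA Φ f k (Φ v fun i => pm (b i)))^2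
        ≤ Lf^2 * (1 + c*Δ)^k * ((2:ℝ)^m * ((1 + c*Δ) * sq2 (fun k' => u k' - v k'))) := by
      calc ∑ b : Fin m → Bool,
          (qA Φ f k (Φ u fun i => pm (b i)) - qA Φ f k (Φ v fun i => pm (b i)))^2
          ≤ ∑ b : Fin m → Bool, Lf^2 * (1 + c*Δ)^k
              * sq2 (fun k' => Φ u (fun i => pm (b i)) k' - Φ v (fun i => pm (b i)) k') :=
            Finset.sum_le_sum fun b _ => ih _ _
        _ = Lf^2 * (1 + c*Δ)^k * ∑ b : Fin m → Bool,
              sq2 (fun k' => Φ u (fun i => pm (b i)) k' - Φ v (fun i => pm (b i)) k') := by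
            rw [Finset.mul_sum]
        _ ≤ _ := by
            refine mul_le_mul_of_nonneg_left ?_
              (mul_nonneg (sq_nonneg Lf) (pow_nonneg h1cΔ k))
            exact step_sum μc σc Δ T L hΔ hΔT hmL hsL u v
    have h2m : (0:ℝ) < (2:ℝ)^m := by positivity
    calc ((2:ℝ)^m)⁻¹^2 * (∑ b : Fin m → Bool,
          (qA Φ f k (Φ u fun i => pm (b i)) - qA Φ f k (Φ v fun i => pm (b i))))^2
        ≤ ((2:ℝ)^m)⁻¹^2 * ((2:ℝ)^m * ∑ b : Fin m → Bool,
          (qA Φ f k (Φ u fun i => pm (b i)) - qA Φ f k (Φ v fun i => pm (b i)))^2) :=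
          mul_le_mul_of_nonneg_left hCS (by positivity)
      _ ≤ ((2:ℝ)^m)⁻¹^2 * ((2:ℝ)^m *
            (Lf^2 * (1 + c*Δ)^k * ((2:ℝ)^m * ((1 + c*Δ) * sq2 (fun k' => u k' - v k'))))) := by
          refine mul_le_mul_of_nonneg_left (mul_le_mul_of_nonneg_left hsum h2m.le) (by positivity)
      _ = Lf^2 * (1 + c*Δ)^(k+1) * sq2 (fun k' => u k' - v k') := by
          field_simp
          ring


lemma sq_lip_of {d : ℕ} {g : (Fin d → ℝ) → ℝ} (hg : HasBddDerivs 1 g) :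
    ∃ L ≥ (0:ℝ), ∀ u v, (g u - g v)^2 ≤ L^2 * sq2 (fun k => u k - v k) := by
  obtain ⟨L, hL0, hL⟩ := lip_of hg
  refine ⟨L, hL0, fun u v => ?_⟩
  have hn : ‖u - v‖ ≤ Real.sqrt (sq2 (fun k => u k - v k)) := by
    rw [pi_norm_le_iff_of_nonneg (Real.sqrt_nonneg _)]
    intro k
    rw [Pi.sub_apply, Real.norm_eq_abs, ← Real.sqrt_sq_eq_abs]
    exact Real.sqrt_le_sqrt (Finset.single_le_sum
      (f := fun k' => (u k' - v k')^2) (fun k' _ => sq_nonneg _) (Finset.mem_univ k))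
  have h1 := hL u v
  have h2 : |g u - g v| ≤ L * Real.sqrt (sq2 (fun k => u k - v k)) :=
    h1.trans (mul_le_mul_of_nonneg_left hn hL0)
  have h3 : (g u - g v)^2 ≤ (L * Real.sqrt (sq2 (fun k => u k - v k)))^2 := by
    rw [← sq_abs]
    exact pow_le_pow_left₀ (abs_nonneg _) h2 2
  calc (g u - g v)^2 ≤ (L * Real.sqrt (sq2 (fun k => u k - v k)))^2 := h3
    _ = L^2 * sq2 (fun k => u k - v k) := by
        rw [mul_pow, Real.sq_sqrt (sq2_nonneg _)]

lemma sum_prod_pm_zero {m : ℕ} {S : Finset (Fin m)} (hS : S.Nonempty) :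
    ∑ b : Fin m → Bool, ∏ i ∈ S, pm (b i) = 0 := by
  obtain ⟨s, hs⟩ := hS
  have h : ∀ b : Fin m → Bool, ∏ i ∈ S, pm (b i)
      = pm (b s) * ∏ i ∈ S.erase s, pm (b i) :=
    fun b => (Finset.mul_prod_erase S _ hs).symm
  rw [Finset.sum_congr rfl fun b _ => h b]
  exact sum_pm_single s _ (fun b v => Finset.prod_congr rfl fun i hi => by
    rw [Function.update_of_ne (Finset.ne_of_mem_erase hi)])



/-- If all `σ^{ki}` are bounded and `f`, `μ^k`, `σ^{ki}` are `C¹`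
with bounded derivatives, then there is `A > 0`, independent of `J`, with
`sup_x |a_{j,S}(x)| ≤ A √Δ` for all `J`, `j ∈ {1,…,J}` and nonempty `S`. -/
theorem stmt7
    {d m : ℕ} (T : ℝ) (hT : 0 < T)
    (μc : (Fin d → ℝ) → Fin d → ℝ) (σc : (Fin d → ℝ) → Fin d → Fin m → ℝ)
    (f : (Fin d → ℝ) → ℝ)
    (hσbdd : ∃ C, ∀ x k i, |σc x k i| ≤ C)
    (hf : HasBddDerivs 1 f)
    (hμ : ∀ k, HasBddDerivs 1 fun x => μc x k)
    (hσ : ∀ k i, HasBddDerivs 1 fun x => σc x k i) :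
    ∃ A > (0 : ℝ), ∀ J : ℕ, 1 ≤ J → ∀ j, 1 ≤ j → j ≤ J →
      ∀ S : Finset (Fin m), S.Nonempty → ∀ x : Fin d → ℝ,
        |aA (PhiE μc σc (T / J)) f (J - j) S x| ≤ A * Real.sqrt (T / J) := by
  obtain ⟨Cσ, hCσ⟩ := hσbdd
  set C' : ℝ := max Cσ 0 with hC'def
  have hC'0 : 0 ≤ C' := le_max_right _ _
  have hC' : ∀ x k i, |σc x k i| ≤ C' := fun x k i => (hCσ x k i).trans (le_max_left _ _)
  obtain ⟨Lf, hLf0, hLf⟩ := sq_lip_of hf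
  choose Lμ hLμ0 hLμ using fun k => sq_lip_of (hμ k)
  choose Lσ hLσ0 hLσ using fun k i => sq_lip_of (hσ k i)
  set L : ℝ := (∑ k, Lμ k) + ∑ k, ∑ i, Lσ k i with hLdef
  have hsum1 : (0:ℝ) ≤ ∑ k, Lμ k := Finset.sum_nonneg fun k _ => hLμ0 k
  have hsum2 : (0:ℝ) ≤ ∑ k, ∑ i, Lσ k i :=
    Finset.sum_nonneg fun k _ => Finset.sum_nonneg fun i _ => hLσ0 k i
  have hL0 : 0 ≤ L := by positivity
  have hμle : ∀ k, Lμ k ≤ L := by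
    intro k
    have := Finset.single_le_sum (f := Lμ) (fun k _ => hLμ0 k) (Finset.mem_univ k)
    linarith
  have hσle : ∀ k i, Lσ k i ≤ L := by
    intro k i
    have h1 : Lσ k i ≤ ∑ i', Lσ k i' :=
      Finset.single_le_sum (f := Lσ k) (fun i' _ => hLσ0 k i') (Finset.mem_univ i)
    have h2 : ∑ i', Lσ k i' ≤ ∑ k', ∑ i', Lσ k' i' :=
      Finset.single_le_sum (f := fun k' => ∑ i', Lσ k' i')
        (fun k' _ => Finset.sum_nonneg fun i' _ => hLσ0 k' i') (Finset.mem_univ k)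
    linarith
  have hmL : ∀ k u v, (μc u k - μc v k)^2 ≤ L^2 * sq2 (fun k' => u k' - v k') :=
    fun k u v => (hLμ k u v).trans (mul_le_mul_of_nonneg_right
      (pow_le_pow_left₀ (hLμ0 k) (hμle k) 2) (sq2_nonneg _))
  have hsL : ∀ k i u v, (σc u k i - σc v k i)^2 ≤ L^2 * sq2 (fun k' => u k' - v k') :=
    fun k i u v => (hLσ k i u v).trans (mul_le_mul_of_nonneg_right
      (pow_le_pow_left₀ (hLσ0 k i) (hσle k i) 2) (sq2_nonneg _))
  set c : ℝ := 1 + d*(1+T)*L^2 + d*m*L^2 with hcdef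
  have hc0 : 0 ≤ c := by
    have hc1 : (0:ℝ) ≤ d*(1+T)*L^2 :=
      mul_nonneg (mul_nonneg (by positivity) (by linarith)) (sq_nonneg L)
    have hc2 : (0:ℝ) ≤ (d:ℝ)*m*L^2 := by positivity
    rw [hcdef]; linarith
  set B : ℝ := Real.sqrt (Lf^2 * Real.exp (c*T) * ((d:ℝ) * ((m:ℝ)*C')^2)) with hBdef
  have hB0 : 0 ≤ B := Real.sqrt_nonneg _
  refine ⟨B + 1, by linarith, ?_⟩
  intro J hJ j hj hjJ S hS x
  set Δ : ℝ := T / J with hΔdef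
  have hJ0 : (0:ℝ) < J := by exact_mod_cast hJ
  have hΔ : 0 < Δ := div_pos hT hJ0
  have hΔT : Δ ≤ T := by
    rw [hΔdef]
    exact div_le_self hT.le (by exact_mod_cast hJ)
  set k : ℕ := J - j with hkdef
  have hkJ : k ≤ J := Nat.sub_le _ _
  -- pow bound
  have hpow : (1 + c*Δ)^k ≤ Real.exp (c*T) := by
    have h1 : (1 + c*Δ) ≤ Real.exp (c*Δ) := by
      have := Real.add_one_le_exp (c*Δ)
      linarith
    have h2 : (0:ℝ) ≤ 1 + c*Δ := by positivity
    calc (1 + c*Δ)^k ≤ (Real.exp (c*Δ))^k := pow_le_pow_left₀ h2 h1 k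
      _ = Real.exp (k * (c*Δ)) := by rw [← Real.exp_nat_mul]
      _ ≤ Real.exp (c*T) := by
          apply Real.exp_le_exp.mpr
          have hΔJ : (J:ℝ) * Δ = T := by rw [hΔdef]; field_simp [hJ0.ne']
          have : (k:ℝ) * Δ ≤ (J:ℝ) * Δ :=
            mul_le_mul_of_nonneg_right (by exact_mod_cast hkJ) hΔ.le
          nlinarith
  -- Lipschitz-type bound for qA at level k, from q_sq
  set Φ := PhiE μc σc Δ with hΦdef
  set q := qA Φ f k with hqdef
  set z : Fin d → ℝ := fun k' => x k' + μc x k' * Δ with hzdef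
  have hqd : ∀ b : Fin m → Bool,
      |q (Φ x fun i => pm (b i)) - q z| ≤ B * Real.sqrt Δ := by
    intro b
    have hsq2 : sq2 (fun k' => Φ x (fun i => pm (b i)) k' - z k')
        ≤ Δ * ((d:ℝ) * ((m:ℝ)*C')^2) := by
      have hk' : ∀ k' : Fin d, (Φ x (fun i => pm (b i)) k' - z k')^2
          ≤ Δ * ((m:ℝ)*C')^2 := by
        intro k'
        have he : Φ x (fun i => pm (b i)) k' - z k'
            = Real.sqrt Δ * ∑ i, σc x k' i * pm (b i) := by
          simp only [hΦdef, PhiE, hzdef]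
          ring
        have hSb : |∑ i, σc x k' i * pm (b i)| ≤ (m:ℝ)*C' := by
          calc |∑ i, σc x k' i * pm (b i)| ≤ ∑ i, |σc x k' i * pm (b i)| :=
              Finset.abs_sum_le_sum_abs _ _
            _ = ∑ i, |σc x k' i| := by
                refine Finset.sum_congr rfl fun i _ => ?_
                rw [abs_mul, pm_abs, mul_one]
            _ ≤ ∑ _i : Fin m, C' := Finset.sum_le_sum fun i _ => hC' x k' i
            _ = (m:ℝ)*C' := by
                simp [Finset.sum_const, Finset.card_univ, nsmul_eq_mul]
        have hS2 : (∑ i, σc x k' i * pm (b i))^2 ≤ ((m:ℝ)*C')^2 := by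
          rw [← sq_abs]
          exact pow_le_pow_left₀ (abs_nonneg _) hSb 2
        rw [he, mul_pow, Real.sq_sqrt hΔ.le]
        exact mul_le_mul_of_nonneg_left hS2 hΔ.le
      calc sq2 (fun k' => Φ x (fun i => pm (b i)) k' - z k')
          ≤ ∑ _k' : Fin d, Δ * ((m:ℝ)*C')^2 := Finset.sum_le_sum fun k' _ => hk' k'
        _ = (d:ℝ) * (Δ * ((m:ℝ)*C')^2) := by
            simp [Finset.sum_const, Finset.card_univ, nsmul_eq_mul]
        _ = Δ * ((d:ℝ) * ((m:ℝ)*C')^2) := by ring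
    have hq2 := q_sq μc σc f Δ T L Lf hT hΔ hΔT hmL hsL hLf k (Φ x fun i => pm (b i)) z
    rw [← hcdef, ← hΦdef, ← hqdef] at hq2
    have hq3 : (q (Φ x fun i => pm (b i)) - q z)^2 ≤ B^2 * Δ := by
      have hB2 : B^2 = Lf^2 * Real.exp (c*T) * ((d:ℝ) * ((m:ℝ)*C')^2) := by
        rw [hBdef, Real.sq_sqrt (by positivity)]
      have s1 : Lf^2 * (1 + c*Δ)^k * sq2 (fun k' => Φ x (fun i => pm (b i)) k' - z k')
          ≤ Lf^2 * Real.exp (c*T) * sq2 (fun k' => Φ x (fun i => pm (b i)) k' - z k') :=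
        mul_le_mul_of_nonneg_right
          (mul_le_mul_of_nonneg_left hpow (sq_nonneg _)) (sq2_nonneg _)
      have s2 : Lf^2 * Real.exp (c*T) * sq2 (fun k' => Φ x (fun i => pm (b i)) k' - z k')
          ≤ Lf^2 * Real.exp (c*T) * (Δ * ((d:ℝ) * ((m:ℝ)*C')^2)) :=
        mul_le_mul_of_nonneg_left hsq2 (by positivity)
      rw [hB2]
      calc (q (Φ x fun i => pm (b i)) - q z)^2
          ≤ Lf^2 * (1 + c*Δ)^k * sq2 (fun k' => Φ x (fun i => pm (b i)) k' - z k') := hq2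
        _ ≤ Lf^2 * Real.exp (c*T) * (Δ * ((d:ℝ) * ((m:ℝ)*C')^2)) := s1.trans s2
        _ = Lf^2 * Real.exp (c*T) * ((d:ℝ) * ((m:ℝ)*C')^2) * Δ := by ring
    calc |q (Φ x fun i => pm (b i)) - q z|
        = Real.sqrt ((q (Φ x fun i => pm (b i)) - q z)^2) := (Real.sqrt_sq_eq_abs _).symm
      _ ≤ Real.sqrt (B^2 * Δ) := Real.sqrt_le_sqrt hq3
      _ = B * Real.sqrt Δ := by
          rw [Real.sqrt_mul (sq_nonneg B), Real.sqrt_sq hB0]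
  -- final assembly
  have hw0 : ∑ b : Fin m → Bool, ∏ i ∈ S, pm (b i) = 0 := sum_prod_pm_zero hS
  have hrw : ∑ b : Fin m → Bool, (∏ i ∈ S, pm (b i)) * q (Φ x fun i => pm (b i))
      = ∑ b : Fin m → Bool, (∏ i ∈ S, pm (b i))
          * (q (Φ x fun i => pm (b i)) - q z) := by
    symm
    rw [Finset.sum_congr rfl (fun (b : Fin m → Bool) _ =>
        mul_sub (∏ i ∈ S, pm (b i)) (q (Φ x fun i => pm (b i))) (q z)),
      Finset.sum_sub_distrib, ← Finset.sum_mul, hw0, zero_mul, sub_zero]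
  have habs : |∑ b : Fin m → Bool, (∏ i ∈ S, pm (b i))
      * (q (Φ x fun i => pm (b i)) - q z)| ≤ (2:ℝ)^m * (B * Real.sqrt Δ) := by
    calc |∑ b : Fin m → Bool, (∏ i ∈ S, pm (b i)) * (q (Φ x fun i => pm (b i)) - q z)|
        ≤ ∑ b : Fin m → Bool, |(∏ i ∈ S, pm (b i)) * (q (Φ x fun i => pm (b i)) - q z)| :=
          Finset.abs_sum_le_sum_abs _ _
      _ ≤ ∑ _b : Fin m → Bool, B * Real.sqrt Δ := by
          refine Finset.sum_le_sum fun b _ => ?_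
          rw [abs_mul, Finset.abs_prod]
          have : ∏ i ∈ S, |pm (b i)| = 1 := by
            rw [Finset.prod_congr rfl fun i _ => pm_abs (b i), Finset.prod_const_one]
          rw [this, one_mul]
          exact hqd b
      _ = (2:ℝ)^m * (B * Real.sqrt Δ) := by
          rw [Finset.sum_const, Finset.card_univ, Fintype.card_fun, nsmul_eq_mul]
          push_cast [Fintype.card_bool, Fintype.card_fin]
          ring
  have h2m : (0:ℝ) < (2:ℝ)^m := by positivity
  have : |aA Φ f k S x| ≤ B * Real.sqrt Δ := by
    unfold aA
    rw [← hqdef, hrw, abs_mul, abs_of_pos (inv_pos.mpr h2m)]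
    calc ((2:ℝ)^m)⁻¹ * |∑ b : Fin m → Bool, (∏ i ∈ S, pm (b i))
          * (q (Φ x fun i => pm (b i)) - q z)|
        ≤ ((2:ℝ)^m)⁻¹ * ((2:ℝ)^m * (B * Real.sqrt Δ)) :=
          mul_le_mul_of_nonneg_left habs (by positivity)
      _ = B * Real.sqrt Δ := by field_simp
  calc |aA Φ f k S x| ≤ B * Real.sqrt Δ := this
    _ ≤ (B + 1) * Real.sqrt Δ := by
        have := Real.sqrt_nonneg Δ
        nlinarith

end
end
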